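/- Under the setting of the previous statement (D = unit vectors, losses s_t ∈ [0,1]^n, exponential perturbations), the expected FPL loss ℓ_t := E[M(s_{<t}+(k−q)/ε_t)·s_t] and expected IFPL loss r_t := E[M(s_{1:t}+(k−q)/ε_t)·s_t] satisfy ℓ_t ≤ e^{ε_t} r_t. Consequently ℓ_{1:T} − r_{1:T} ≤ Σ_{t=1}^T ε_t ℓ_t. -/

import Mathlib

open MeasureTheory

private lemma fpl_aux_algebra {e : ℝ} (he : 0 < e) (wi wj ki kj y z : ℝ) :
    wi + (ki - y) / e < wj + (kj - z) / e ↔ z + e * (wi - wj) + ki - kj < y := by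
  rw [show wi + (ki - y) / e < wj + (kj - z) / e ↔
      (wi + (ki - y) / e) * e < (wj + (kj - z) / e) * e from (mul_lt_mul_iff_of_pos_right he).symm,
    add_mul, add_mul, div_mul_cancel₀ _ he.ne', div_mul_cancel₀ _ he.ne']
  constructor <;> intro h <;> nlinarith

private lemma fpl_exp_Ioi (ρ : Measure ℝ) [IsProbabilityMeasure ρ]
    (h0 : ∀ a : ℝ, 0 ≤ a → ρ (Set.Ici a) = ENNReal.ofReal (Real.exp (-a)))
    (a : ℝ) : ρ (Set.Ioi a) = ENNReal.ofReal (Real.exp (-max a 0)) := by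
  apply le_antisymm
  · rcases le_or_gt 0 a with ha | ha
    · calc ρ (Set.Ioi a) ≤ ρ (Set.Ici a) := measure_mono Set.Ioi_subset_Ici_self
        _ = _ := by rw [h0 a ha, max_eq_left ha]
    · rw [max_eq_right ha.le, neg_zero, Real.exp_zero, ENNReal.ofReal_one]
      exact prob_le_one
  · set c := max a 0 with hc
    have key : ∀ m : ℕ, ENNReal.ofReal (Real.exp (-c - 1 / (m + 1))) ≤ ρ (Set.Ioi a) := by
      intro m
      have hpos : (0 : ℝ) < 1 / (m + 1) := by positivity
      have hsub : Set.Ici (c + 1 / (m + 1)) ⊆ Set.Ioi a := by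
        intro y hy
        have : a ≤ c := le_max_left a 0
        simp only [Set.mem_Ici] at hy
        simp only [Set.mem_Ioi]
        linarith
      have h := h0 (c + 1 / (m + 1)) (by positivity)
      calc ENNReal.ofReal (Real.exp (-c - 1 / (m + 1)))
          = ρ (Set.Ici (c + 1 / (m + 1))) := by rw [h]; ring_nf
        _ ≤ ρ (Set.Ioi a) := measure_mono hsub
    have htend : Filter.Tendsto (fun m : ℕ => ENNReal.ofReal (Real.exp (-c - 1 / (m + 1))))
        Filter.atTop (nhds (ENNReal.ofReal (Real.exp (-c)))) := by
      apply ENNReal.tendsto_ofReal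
      have h1 : Filter.Tendsto (fun m : ℕ => -c - 1 / ((m : ℝ) + 1)) Filter.atTop
          (nhds (-c - 0)) :=
        Filter.Tendsto.const_sub _ tendsto_one_div_add_atTop_nhds_zero_nat
      rw [sub_zero] at h1
      exact (Real.continuous_exp.tendsto _).comp h1
    exact le_of_tendsto' htend key

private lemma fpl_exp_compare (ρ : Measure ℝ) [IsProbabilityMeasure ρ]
    (h0 : ∀ a : ℝ, 0 ≤ a → ρ (Set.Ici a) = ENNReal.ofReal (Real.exp (-a)))
    {e a b : ℝ} (he : 0 < e) (hb : b ≤ a + e) :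
    ρ (Set.Ioi a) ≤ ENNReal.ofReal (Real.exp e) * ρ (Set.Ioi b) := by
  rw [fpl_exp_Ioi ρ h0 a, fpl_exp_Ioi ρ h0 b, ← ENNReal.ofReal_mul (Real.exp_pos _).le,
    ← Real.exp_add]
  apply ENNReal.ofReal_le_ofReal
  apply Real.exp_le_exp.2
  have h1 := le_max_left a 0
  have h2 := le_max_right a 0
  have : max b 0 ≤ e + max a 0 := max_le (by linarith) (by linarith)
  linarith

/-- FPL bounded by IFPL: ℓ_t ≤ e^{ε_t} r_t, hence ℓ_{1:T} - r_{1:T} ≤ Σ_t ε_t ℓ_t. -/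
theorem fpl_bounded_by_ifpl {Ω : Type*} [MeasurableSpace Ω] (μ : Measure Ω)
    [IsProbabilityMeasure μ] (n : ℕ) (hn : 1 ≤ n) (T : ℕ)
    (q : Fin n → Ω → ℝ) (hmeas : ∀ i, Measurable (q i))
    (hindep : ProbabilityTheory.iIndepFun q μ)
    (htail : ∀ i, ∀ a : ℝ, 0 ≤ a → μ {ω | a ≤ q i ω} = ENNReal.ofReal (Real.exp (-a)))
    (htail' : ∀ i, ∀ a : ℝ, a < 0 → μ {ω | a ≤ q i ω} = 1)
    (s : ℕ → Fin n → ℝ) (hs : ∀ t i, s t i ∈ Set.Icc (0 : ℝ) 1)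
    (k : Fin n → ℝ) (ε : ℕ → ℝ) (hε : ∀ t, 0 < ε t)
    -- FPL decision I t minimizes s_{<t} + (k - q)/ε_t,
    -- IFPL decision J t minimizes s_{1:t} + (k - q)/ε_t
    (I J : ℕ → Ω → Fin n)
    (hImeas : ∀ t, Measurable (I t)) (hJmeas : ∀ t, Measurable (J t))
    (hI : ∀ t ω i,
      (∑ u ∈ Finset.Icc 1 (t - 1), s u) (I t ω) + (k (I t ω) - q (I t ω) ω) / ε t ≤
        (∑ u ∈ Finset.Icc 1 (t - 1), s u) i + (k i - q i ω) / ε t)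
    (hJ : ∀ t ω i,
      (∑ u ∈ Finset.Icc 1 t, s u) (J t ω) + (k (J t ω) - q (J t ω) ω) / ε t ≤
        (∑ u ∈ Finset.Icc 1 t, s u) i + (k i - q i ω) / ε t)
    (hIuniq : ∀ t, ∀ᵐ ω ∂μ, ∀ i, i ≠ I t ω →
      (∑ u ∈ Finset.Icc 1 (t - 1), s u) (I t ω) + (k (I t ω) - q (I t ω) ω) / ε t <
        (∑ u ∈ Finset.Icc 1 (t - 1), s u) i + (k i - q i ω) / ε t)
    (hJuniq : ∀ t, ∀ᵐ ω ∂μ, ∀ i, i ≠ J t ω →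
      (∑ u ∈ Finset.Icc 1 t, s u) (J t ω) + (k (J t ω) - q (J t ω) ω) / ε t <
        (∑ u ∈ Finset.Icc 1 t, s u) i + (k i - q i ω) / ε t)
    -- expected FPL and IFPL losses
    (ℓ r : ℕ → ℝ)
    (hℓ : ∀ t, ℓ t = ∫ ω, s t (I t ω) ∂μ)
    (hr : ∀ t, r t = ∫ ω, s t (J t ω) ∂μ) :
    (∀ t, ℓ t ≤ Real.exp (ε t) * r t) ∧
      ∑ t ∈ Finset.Icc 1 T, ℓ t - ∑ t ∈ Finset.Icc 1 T, r t ≤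
        ∑ t ∈ Finset.Icc 1 T, ε t * ℓ t := by
  classical
  -- representation of the expected loss as a finite sum
  have hrep : ∀ (t : ℕ) (X : Ω → Fin n), Measurable X →
      ∫ ω, s t (X ω) ∂μ = ∑ i : Fin n, s t i * (μ (X ⁻¹' {i})).toReal := by
    intro t X hX
    have hpt : ∀ ω, s t (X ω) = ∑ i : Fin n, Set.indicator (X ⁻¹' {i}) (fun _ => s t i) ω := by
      intro ω
      rw [Finset.sum_eq_single (X ω)]
      · simp
      · intro i _ hi
        exact Set.indicator_of_notMem (by simp [Ne.symm hi]) _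
      · simp
    calc ∫ ω, s t (X ω) ∂μ
        = ∫ ω, ∑ i : Fin n, Set.indicator (X ⁻¹' {i}) (fun _ => s t i) ω ∂μ :=
          integral_congr_ae (Filter.Eventually.of_forall hpt)
      _ = ∑ i : Fin n, ∫ ω, Set.indicator (X ⁻¹' {i}) (fun _ => s t i) ω ∂μ := by
          apply integral_finset_sum
          intro i _
          exact (integrable_indicator_iff (hX (measurableSet_singleton i))).2
            (integrableOn_const (measure_ne_top μ _))
      _ = ∑ i : Fin n, s t i * (μ (X ⁻¹' {i})).toReal := by
          refine Finset.sum_congr rfl fun i _ => ?_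
          rw [integral_indicator_const _ (hX (measurableSet_singleton i)), smul_eq_mul, mul_comm]
          rfl
  -- key measure comparison
  have key : ∀ (t : ℕ) (i : Fin n),
      μ (I t ⁻¹' {i}) ≤ ENNReal.ofReal (Real.exp (ε t)) * μ (J t ⁻¹' {i}) := by
    intro t i
    have hd : ∀ j, 0 ≤ (∑ u ∈ Finset.Icc 1 t, s u) j - (∑ u ∈ Finset.Icc 1 (t - 1), s u) j ∧
        (∑ u ∈ Finset.Icc 1 t, s u) j - (∑ u ∈ Finset.Icc 1 (t - 1), s u) j ≤ 1 := by
      intro j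
      rcases Nat.eq_zero_or_pos t with h0 | hpos
      · subst h0; norm_num
      · obtain ⟨m, rfl⟩ := Nat.exists_eq_succ_of_ne_zero hpos.ne'
        have happ : (∑ u ∈ Finset.Icc 1 (m + 1), s u) j
            = (∑ u ∈ Finset.Icc 1 m, s u) j + s (m + 1) j := by
          simp only [Finset.sum_apply]
          exact Finset.sum_Icc_succ_top (by omega) _
        have hsm := hs (m + 1) j
        simp only [Set.mem_Icc] at hsm
        simp only [Nat.succ_sub_one, happ]
        constructor <;> linarith
    by_cases hS : (Finset.univ.erase i : Finset (Fin n)).Nonempty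
    · -- main case: there is some alternative decision
      set S := (Finset.univ.erase i : Finset (Fin n)) with hSdef
      haveI hne : Nonempty ↥S := Finset.nonempty_coe_sort.2 hS
      set Q : Ω → (↥S → ℝ) := fun ω j => q j ω with hQdef
      have hQ : Measurable Q := measurable_pi_lambda _ fun j => hmeas j
      have hIndep : ProbabilityTheory.IndepFun Q (q i) μ := by
        have hdisj : Disjoint S ({i} : Finset (Fin n)) := by
          simp [hSdef, Finset.disjoint_singleton_right]
        have h := hindep.indepFun_finset S {i} hdisj hmeas
        exact h.comp measurable_id
          (measurable_pi_apply (⟨i, Finset.mem_singleton_self i⟩ : ({i} : Finset (Fin n))))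
      set ρ := μ.map (q i) with hρdef
      haveI : IsProbabilityMeasure ρ := Measure.isProbabilityMeasure_map (hmeas i).aemeasurable
      set σm := μ.map Q with hσdef
      haveI : IsProbabilityMeasure σm := Measure.isProbabilityMeasure_map hQ.aemeasurable
      have hρ0 : ∀ a : ℝ, 0 ≤ a → ρ (Set.Ici a) = ENNReal.ofReal (Real.exp (-a)) := by
        intro a ha
        rw [hρdef, Measure.map_apply (hmeas i) measurableSet_Ici]
        exact htail i a ha
      set U : (Fin n → ℝ) → Set ((↥S → ℝ) × ℝ) :=
        fun v => {p | ∀ j : ↥S, p.1 j + ε t * (v i - v j) + k i - k j < p.2} with hUdef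
      have hUmeas : ∀ v : Fin n → ℝ, MeasurableSet (U v) := by
        intro v
        have hrw : U v = ⋂ j : ↥S, {p : (↥S → ℝ) × ℝ | p.1 j + ε t * (v i - v j) + k i - k j < p.2} := by
          ext p; simp [hUdef]
        rw [hrw]
        refine MeasurableSet.iInter fun j => measurableSet_lt ?_ measurable_snd
        fun_prop
      have hpair : Measurable fun ω => (Q ω, q i ω) := hQ.prodMk (hmeas i)
      have hpre : ∀ v : Fin n → ℝ,
          (fun ω => (Q ω, q i ω)) ⁻¹' U v
            = {ω | ∀ j, j ≠ i → v i + (k i - q i ω) / ε t < v j + (k j - q j ω) / ε t} := by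
        intro v
        ext ω
        simp only [hUdef, Set.mem_preimage, Set.mem_setOf_eq]
        constructor
        · intro h j hj
          exact (fpl_aux_algebra (hε t) (v i) (v j) (k i) (k j) (q i ω) (q j ω)).2
            (h ⟨j, Finset.mem_erase.2 ⟨hj, Finset.mem_univ j⟩⟩)
        · intro h j
          have hj : (j : Fin n) ≠ i := (Finset.mem_erase.1 j.2).1
          exact (fpl_aux_algebra (hε t) (v i) (v (j : Fin n)) (k i) (k (j : Fin n))
            (q i ω) (q (j : Fin n) ω)).1 (h (j : Fin n) hj)
      have hmap : μ.map (fun ω => (Q ω, q i ω)) = σm.prod ρ :=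
        (ProbabilityTheory.indepFun_iff_map_prod_eq_prod_map_map hQ.aemeasurable
          (hmeas i).aemeasurable).1 hIndep
      -- identify the two events up to null sets
      have hmeasI : μ (I t ⁻¹' {i}) = (σm.prod ρ) (U (∑ u ∈ Finset.Icc 1 (t - 1), s u)) := by
        have h1 : I t ⁻¹' {i}
            =ᵐ[μ] ((fun ω => (Q ω, q i ω)) ⁻¹' U (∑ u ∈ Finset.Icc 1 (t - 1), s u)) := by
          rw [hpre]
          apply Filter.eventuallyEq_set.2
          filter_upwards [hIuniq t] with ω hω
          simp only [Set.mem_preimage, Set.mem_singleton_iff, Set.mem_setOf_eq]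
          constructor
          · intro hIt j hj
            have h2 := hω j (by rw [hIt]; exact hj)
            rwa [hIt] at h2
          · intro h
            by_contra hne'
            have h1 := hI t ω i
            have h2 := h (I t ω) hne'
            linarith
        rw [measure_congr h1, ← Measure.map_apply hpair (hUmeas _), hmap]
      have hmeasJ : μ (J t ⁻¹' {i}) = (σm.prod ρ) (U (∑ u ∈ Finset.Icc 1 t, s u)) := by
        have h1 : J t ⁻¹' {i}
            =ᵐ[μ] ((fun ω => (Q ω, q i ω)) ⁻¹' U (∑ u ∈ Finset.Icc 1 t, s u)) := by
          rw [hpre]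
          apply Filter.eventuallyEq_set.2
          filter_upwards [hJuniq t] with ω hω
          simp only [Set.mem_preimage, Set.mem_singleton_iff, Set.mem_setOf_eq]
          constructor
          · intro hJt j hj
            have h2 := hω j (by rw [hJt]; exact hj)
            rwa [hJt] at h2
          · intro h
            by_contra hne'
            have h1 := hJ t ω i
            have h2 := h (J t ω) hne'
            linarith
        rw [measure_congr h1, ← Measure.map_apply hpair (hUmeas _), hmap]
      rw [hmeasI, hmeasJ, Measure.prod_apply (hUmeas _), Measure.prod_apply (hUmeas _),
        ← MeasureTheory.lintegral_const_mul' _ _ ENNReal.ofReal_ne_top]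
      apply lintegral_mono
      intro z
      have hslice : ∀ v : Fin n → ℝ, Prod.mk z ⁻¹' (U v)
          = Set.Ioi (Finset.univ.sup' Finset.univ_nonempty
              (fun j : ↥S => z j + ε t * (v i - v j) + k i - k j)) := by
        intro v
        ext y
        simp only [hUdef, Set.mem_preimage, Set.mem_setOf_eq, Set.mem_Ioi,
          Finset.sup'_lt_iff, Finset.mem_univ, true_implies]
      beta_reduce
      rw [hslice, hslice]
      apply fpl_exp_compare ρ hρ0 (hε t)
      apply Finset.sup'_le
      intro j _
      have h1 := Finset.le_sup'
        (fun j : ↥S => z j + ε t * ((∑ u ∈ Finset.Icc 1 (t - 1), s u) i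
          - (∑ u ∈ Finset.Icc 1 (t - 1), s u) j) + k i - k j) (Finset.mem_univ j)
      have h2 := hd i
      have h3 := hd (j : Fin n)
      have h4 : ε t * (((∑ u ∈ Finset.Icc 1 t, s u) i - (∑ u ∈ Finset.Icc 1 (t - 1), s u) i)
          - ((∑ u ∈ Finset.Icc 1 t, s u) (j : Fin n)
            - (∑ u ∈ Finset.Icc 1 (t - 1), s u) (j : Fin n))) ≤ ε t * 1 :=
        mul_le_mul_of_nonneg_left (by linarith [h2.2, h3.1]) (hε t).le
      nlinarith [h1, h4]
    · -- degenerate case: n = 1, I and J are forced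
      have hall : ∀ j : Fin n, j = i := by
        intro j
        by_contra hj
        exact hS ⟨j, Finset.mem_erase.2 ⟨hj, Finset.mem_univ j⟩⟩
      have hIu : I t ⁻¹' {i} = Set.univ := by
        ext ω; simp [hall (I t ω)]
      have hJu : J t ⁻¹' {i} = Set.univ := by
        ext ω; simp [hall (J t ω)]
      rw [hIu, hJu, measure_univ, mul_one]
      exact ENNReal.one_le_ofReal.2 (Real.one_le_exp (hε t).le)
  -- pointwise comparison of the expected losses
  have main1 : ∀ t, ℓ t ≤ Real.exp (ε t) * r t := by
    intro t
    rw [hℓ, hr, hrep t (I t) (hImeas t), hrep t (J t) (hJmeas t), Finset.mul_sum]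
    apply Finset.sum_le_sum
    intro i _
    have hk := key t i
    have h1 : (μ (I t ⁻¹' {i})).toReal ≤ Real.exp (ε t) * (μ (J t ⁻¹' {i})).toReal := by
      have h2 := ENNReal.toReal_mono
        (ENNReal.mul_ne_top ENNReal.ofReal_ne_top (measure_ne_top μ _)) hk
      rwa [ENNReal.toReal_mul, ENNReal.toReal_ofReal (Real.exp_pos _).le] at h2
    calc s t i * (μ (I t ⁻¹' {i})).toReal
        ≤ s t i * (Real.exp (ε t) * (μ (J t ⁻¹' {i})).toReal) :=
          mul_le_mul_of_nonneg_left h1 (hs t i).1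
      _ = Real.exp (ε t) * (s t i * (μ (J t ⁻¹' {i})).toReal) := by ring
  have hℓnn : ∀ t, 0 ≤ ℓ t := by
    intro t
    rw [hℓ, hrep t (I t) (hImeas t)]
    exact Finset.sum_nonneg fun i _ => mul_nonneg (hs t i).1 ENNReal.toReal_nonneg
  refine ⟨main1, ?_⟩
  rw [← Finset.sum_sub_distrib]
  apply Finset.sum_le_sum
  intro t _
  have h2 : Real.exp (-ε t) * ℓ t ≤ r t := by
    have h3 := mul_le_mul_of_nonneg_left (main1 t) (Real.exp_pos (-ε t)).le
    rw [← mul_assoc, ← Real.exp_add, neg_add_cancel, Real.exp_zero, one_mul] at h3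
    linarith
  have h4 : 1 - ε t ≤ Real.exp (-ε t) := by
    have := Real.add_one_le_exp (-ε t)
    linarith
  nlinarith [mul_le_mul_of_nonneg_right h4 (hℓnn t), h2]
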